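/- Let X be an N-valued random variable with E[X] = λ > 0. Define the probability mass function q(x) = (x+1)·P(X = x+1)/λ for x ∈ ℕ. Then q is a probability distribution on ℕ, and for any random variable X* with P(X* = x) = q(x) and any function f : ℕ → ℝ such that X·f(X) is integrable, one has E[X·f(X)] = λ·E[f(X*+1)]. -/

import Mathlib

open MeasureTheory
open scoped ENNReal NNReal

lemma integral_nat_eq_tsum' {m : Measure ℕ} {g : ℕ → ℝ} (hg : Integrable g m) :
    (∫ n, g n ∂m = ∑' n, (m {n}).toReal * g n) ∧ Summable (fun n => (m {n}).toReal * ‖g n‖) := by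
  constructor
  · rw [integral_countable' hg]; simp [smul_eq_mul, Measure.real]
  · have h1 : ∑' n, (‖g n‖₊ : ℝ≥0∞) * m {n} ≠ ∞ := by
      rw [← lintegral_countable']; exact hg.hasFiniteIntegral.ne
    have h2 := ENNReal.summable_toReal h1
    exact h2.congr fun n => by
      rw [ENNReal.toReal_mul, mul_comm]; simp

/-- Zero bias transformation: `q(x) = (x+1)·P(X = x+1)/λ` is a probability distribution
on `ℕ`, and any `X*` distributed according to `q` satisfies
`E[X·f(X)] = λ·E[f(X*+1)]` whenever `X·f(X)` is integrable. -/
theorem poisson_zero_bias {Ω Ω' : Type*} [MeasurableSpace Ω] [MeasurableSpace Ω']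
    (μ : Measure Ω) (ν : Measure Ω') [IsProbabilityMeasure μ] [IsProbabilityMeasure ν]
    (X : Ω → ℕ) (hX : Measurable X) (hXint : Integrable (fun ω => (X ω : ℝ)) μ)
    (lam : ℝ) (hlam : lam = ∫ ω, (X ω : ℝ) ∂μ) (hpos : 0 < lam)
    (q : ℕ → ℝ) (hq : ∀ x : ℕ, q x = ((x : ℝ) + 1) * (μ {ω | X ω = x + 1}).toReal / lam) :
    ((∀ x : ℕ, 0 ≤ q x) ∧ (∑' x : ℕ, q x) = 1) ∧
      ∀ (Xs : Ω' → ℕ), Measurable Xs → (∀ x : ℕ, (ν {ω | Xs ω = x}).toReal = q x) →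
        ∀ f : ℕ → ℝ, Integrable (fun ω => (X ω : ℝ) * f (X ω)) μ →
          ∫ ω, (X ω : ℝ) * f (X ω) ∂μ = lam * ∫ ω, f (Xs ω + 1) ∂ν := by
  have hq0 : ∀ x : ℕ, 0 ≤ q x := by
    intro x; rw [hq]; positivity
  set m := μ.map X with hm
  have hmeas : ∀ g : ℕ → ℝ, Measurable g := fun g => measurable_from_top
  have hmeq : ∀ n : ℕ, (m {n}).toReal = (μ {ω | X ω = n}).toReal := by
    intro n
    rw [hm, Measure.map_apply hX (measurableSet_singleton n)]
    congr 1
  have htrans : ∀ g : ℕ → ℝ, Integrable (fun ω => g (X ω)) μ → Integrable g m := by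
    intro g hgi
    rw [hm, integrable_map_measure ((hmeas g).aestronglyMeasurable) hX.aemeasurable]
    exact hgi
  have hint_map : ∀ g : ℕ → ℝ, ∫ ω, g (X ω) ∂μ = ∫ n, g n ∂m := by
    intro g
    rw [hm, integral_map hX.aemeasurable ((hmeas g).aestronglyMeasurable)]
  -- the mean as a sum
  have hXm : Integrable (fun n : ℕ => (n : ℝ)) m := htrans _ hXint
  have hmean := integral_nat_eq_tsum' hXm
  have hlam' : lam = ∑' n : ℕ, (m {n}).toReal * (n : ℝ) := by
    rw [hlam, hint_map (fun n : ℕ => (n : ℝ)), hmean.1]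
  have hSmean : Summable (fun n : ℕ => (m {n}).toReal * (n : ℝ)) := by
    refine hmean.2.congr fun n => ?_
    rw [Real.norm_natCast]
  -- sum of q equals 1
  have hqsum : (∑' x : ℕ, q x) = 1 := by
    have h1 : ∑' n : ℕ, (m {n}).toReal * (n : ℝ)
        = ∑' x : ℕ, (m {x + 1}).toReal * ((x : ℝ) + 1) := by
      rw [hSmean.tsum_eq_zero_add]
      push_cast
      simp
    have h2 : ∀ x : ℕ, q x = (m {x + 1}).toReal * ((x : ℝ) + 1) / lam := by
      intro x
      rw [hq, hmeq]; ring
    calc ∑' x : ℕ, q x = ∑' x : ℕ, (m {x + 1}).toReal * ((x : ℝ) + 1) / lam := tsum_congr h2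
      _ = (∑' x : ℕ, (m {x + 1}).toReal * ((x : ℝ) + 1)) / lam := tsum_div_const
      _ = lam / lam := by rw [← h1, ← hlam']
      _ = 1 := div_self hpos.ne'
  refine ⟨⟨hq0, hqsum⟩, ?_⟩
  intro Xs hXs hXsq f hf
  set m' := ν.map Xs with hm'
  have : IsProbabilityMeasure m' := Measure.isProbabilityMeasure_map hXs.aemeasurable
  have hm'eq : ∀ x : ℕ, (m' {x}).toReal = q x := by
    intro x
    rw [hm', Measure.map_apply hXs (measurableSet_singleton x)]
    exact hXsq x
  have hm'x : ∀ x : ℕ, m' {x} = ENNReal.ofReal (q x) := by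
    intro x
    rw [← hm'eq x, ENNReal.ofReal_toReal (measure_ne_top _ _)]
  -- integral of X f(X) as a sum
  have hgf := integral_nat_eq_tsum' (htrans (fun n : ℕ => (n : ℝ) * f n) hf)
  have hSf : Summable (fun n : ℕ => (m {n}).toReal * ‖(n : ℝ) * f n‖) := hgf.2
  have hSf' : Summable (fun n : ℕ => (m {n}).toReal * ((n : ℝ) * f n)) := by
    apply Summable.of_norm
    refine hSf.congr fun n => ?_
    rw [norm_mul, norm_mul, Real.norm_of_nonneg ENNReal.toReal_nonneg, ← norm_mul]
  -- summability on the ν side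
  have hshift : Summable (fun x : ℕ => (m {x + 1}).toReal * ‖((x : ℝ) + 1) * f (x + 1)‖) := by
    have := (summable_nat_add_iff 1).mpr hSf
    refine this.congr fun x => ?_
    push_cast; ring_nf
  have hSν : Summable (fun x : ℕ => ‖f (x + 1)‖ * q x) := by
    refine (hshift.div_const lam).congr fun x => ?_
    rw [hq, ← hmeq, norm_mul, Real.norm_of_nonneg (by positivity : (0:ℝ) ≤ (x : ℝ) + 1)]
    ring
  -- integrability of f (Xs + 1)
  have hintm' : Integrable (fun x : ℕ => f (x + 1)) m' := by
    refine ⟨(hmeas _).aestronglyMeasurable, ?_⟩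
    have hfin : (∫⁻ x : ℕ, ‖f (x + 1)‖₊ ∂m') < ∞ := by
      rw [lintegral_countable']
      have hterm : ∀ x : ℕ,
          (‖f (x + 1)‖₊ : ℝ≥0∞) * m' {x} = ENNReal.ofReal (‖f (x + 1)‖ * q x) := by
        intro x
        rw [hm'x x, ENNReal.ofReal_mul (norm_nonneg _), ofReal_norm]; rfl
      rw [tsum_congr hterm, ← ENNReal.ofReal_tsum_of_nonneg (fun x => mul_nonneg (norm_nonneg _) (hq0 x)) hSν]
      exact ENNReal.ofReal_lt_top
    exact hfin
  have hintν : Integrable (fun ω => f (Xs ω + 1)) ν :=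
    (integrable_map_measure ((hmeas fun x => f (x + 1)).aestronglyMeasurable)
      hXs.aemeasurable).mp hintm'
  -- compute both sides
  have hR : ∫ ω, f (Xs ω + 1) ∂ν = ∑' x : ℕ, q x * f (x + 1) := by
    have h3 := (integral_nat_eq_tsum' hintm').1
    rw [hm', integral_map hXs.aemeasurable
      ((hmeas fun x => f (x + 1)).aestronglyMeasurable)] at h3
    rw [h3]
    exact tsum_congr fun x => by rw [hm'eq]
  rw [hR, hint_map (fun n : ℕ => (n : ℝ) * f n), hgf.1, ← tsum_mul_left]
  rw [hSf'.tsum_eq_zero_add]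
  simp only [Nat.cast_zero, zero_mul, mul_zero, zero_add]
  refine tsum_congr fun x => ?_
  rw [hq, hmeq]
  push_cast
  field_simp
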